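/- arXiv:1610.03563 — 3 statements merged into one kernel-verified Lean document; each statement's English description precedes it below -/
import Mathlib

section
/- Let m ∈ ℕ, (c₁, c₂) ∈ ℂ² with (c₁,c₂) ≠ (0,0), μ ∈ ℂ with μ ≠ 0, and λ₀, …, λ_m ∈ ℂ; define gᵢ(r) := Σ_{j=i}^{m} (λⱼ/(j−i+1))·C(j, j−i)·r^{j−i+1} for 0 ≤ i ≤ m. Then the map (t₁,t₂)·(x,y) = (x + Σ_{i=0}^{m} gᵢ(c₁t₁ + c₂t₂)·yⁱ + μ(c̄₂t₁ − c̄₁t₂) , y + c₁t₁ + c₂t₂), where c̄₁, c̄₂ are the complex conjugates of c₁, c₂, defines a simply transitive action of the additive group (ℂ², +) on ℂ²; that is, it is an action, and for all P, Q ∈ ℂ² there is a unique (t₁,t₂) ∈ ℂ² with (t₁,t₂)·P = Q. -/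
open Finset

/-- `gfun m l i r = ∑_{j=i}^{m} (l j/(j-i+1)) * C(j, j-i) * r^(j-i+1)`. -/
noncomputable def gfun (m : ℕ) (l : ℕ → ℂ) (i : ℕ) (r : ℂ) : ℂ :=
  ∑ j ∈ Finset.Icc i m, (l j / ((j - i + 1 : ℕ) : ℂ)) * ((j.choose (j - i) : ℕ) : ℂ) * r ^ (j - i + 1)

/-- A (left) action of the additive group `(ℂ², +)` on `ℂ²`. -/
def IsAction (Φ : (ℂ × ℂ) → (ℂ × ℂ) → ℂ × ℂ) : Prop :=
  (∀ z, Φ (0, 0) z = z) ∧ ∀ t t' z, Φ (t + t') z = Φ t (Φ t' z)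

/-- The map `(t₁,t₂)·(x,y) = (x + Σᵢ gᵢ(c₁t₁+c₂t₂) yⁱ + μ(c̄₂t₁-c̄₁t₂), y + c₁t₁+c₂t₂)`. -/
noncomputable def PhiG (m : ℕ) (l : ℕ → ℂ) (c₁ c₂ μ : ℂ) (t z : ℂ × ℂ) : ℂ × ℂ :=
  (z.1 + ∑ i ∈ Finset.range (m + 1), gfun m l i (c₁ * t.1 + c₂ * t.2) * z.2 ^ i +
      μ * ((starRingEnd ℂ) c₂ * t.1 - (starRingEnd ℂ) c₁ * t.2),
   z.2 + c₁ * t.1 + c₂ * t.2)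

noncomputable def Ffun (m : ℕ) (l : ℕ → ℂ) (y : ℂ) : ℂ :=
  ∑ j ∈ Finset.range (m+1), l j / ((j + 1 : ℕ) : ℂ) * y ^ (j+1)

lemma inner_id (j : ℕ) (lj r y : ℂ) :
    ∑ i ∈ range (j+1), lj / ((j - i + 1 : ℕ) : ℂ) * ((j.choose (j - i) : ℕ) : ℂ) * r ^ (j - i + 1) * y ^ i
      = lj / ((j + 1 : ℕ) : ℂ) * ((y + r) ^ (j+1) - y ^ (j+1)) := by
  conv_rhs => rw [add_pow, Finset.sum_range_succ]
  conv_rhs => rw [Nat.sub_self, pow_zero, Nat.choose_self, Nat.cast_one, mul_one, mul_one,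
    add_sub_cancel_right, Finset.mul_sum]
  refine Finset.sum_congr rfl ?_
  intro k hk
  rw [Finset.mem_range] at hk
  have hk' : k ≤ j := Nat.lt_succ_iff.mp hk
  have h1 := Nat.add_one_mul_choose_eq j (j-k)
  have h2 : (j+1).choose (j-k+1) = (j+1).choose k := by
    have h4 := Nat.choose_symm (n := j+1) (k := j-k+1) (by omega)
    have h3 : j+1 - (j-k+1) = k := by omega
    rw [h3] at h4
    exact h4.symm
  have key : (j+1) * j.choose (j-k) = (j-k+1) * (j+1).choose k := by
    rw [← h2, mul_comm (j-k+1)]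
    exact h1
  have keyC : ((j+1 : ℕ) : ℂ) * (j.choose (j-k) : ℕ) = ((j-k+1 : ℕ) : ℂ) * ((j+1).choose k : ℕ) := by
    exact_mod_cast congrArg (Nat.cast : ℕ → ℂ) key
  have hp : j + 1 - k = j - k + 1 := by omega
  rw [hp]
  have hA : ((j - k + 1 : ℕ) : ℂ) ≠ 0 := Nat.cast_ne_zero.mpr (by omega)
  have hB : ((j + 1 : ℕ) : ℂ) ≠ 0 := Nat.cast_ne_zero.mpr (by omega)
  have hdiv : lj / ((j - k + 1 : ℕ) : ℂ) * ((j.choose (j - k) : ℕ) : ℂ)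
      = lj / ((j + 1 : ℕ) : ℂ) * (((j+1).choose k : ℕ) : ℂ) := by
    rw [div_mul_eq_mul_div, div_mul_eq_mul_div, div_eq_div_iff hA hB]
    linear_combination lj * keyC
  linear_combination r ^ (j - k + 1) * y ^ k * hdiv

lemma gsum_eq (m : ℕ) (l : ℕ → ℂ) (r y : ℂ) :
    ∑ i ∈ range (m+1), gfun m l i r * y ^ i = Ffun m l (y + r) - Ffun m l y := by
  simp only [gfun, Finset.sum_mul]
  rw [Finset.sum_comm' (t' := Finset.range (m+1)) (s' := fun j => Finset.range (j+1))]
  · rw [Ffun, Ffun, ← Finset.sum_sub_distrib]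
    refine Finset.sum_congr rfl ?_
    intro j _
    rw [← mul_sub]
    exact inner_id j (l j) r y
  · intro i j
    simp only [Finset.mem_range, Finset.mem_Icc]
    omega

lemma lin_solve (c₁ c₂ : ℂ) (hN : c₁ * (starRingEnd ℂ) c₁ + c₂ * (starRingEnd ℂ) c₂ ≠ 0)
    (d e : ℂ) :
    ∃! t : ℂ × ℂ, c₁ * t.1 + c₂ * t.2 = d ∧
      (starRingEnd ℂ) c₂ * t.1 - (starRingEnd ℂ) c₁ * t.2 = e := by
  set N := c₁ * (starRingEnd ℂ) c₁ + c₂ * (starRingEnd ℂ) c₂ with hNdef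
  refine ⟨((((starRingEnd ℂ) c₁ * d + c₂ * e) / N, ((starRingEnd ℂ) c₂ * d - c₁ * e) / N)),
    ⟨?_, ?_⟩, ?_⟩
  · field_simp
    ring
  · field_simp
    ring
  · rintro ⟨u₁, u₂⟩ ⟨h1, h2⟩
    simp only at h1 h2
    have e1 : u₁ = ((starRingEnd ℂ) c₁ * d + c₂ * e) / N := by
      rw [eq_div_iff hN]
      linear_combination (starRingEnd ℂ) c₁ * h1 + c₂ * h2
    have e2 : u₂ = ((starRingEnd ℂ) c₂ * d - c₁ * e) / N := by
      rw [eq_div_iff hN]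
      linear_combination (starRingEnd ℂ) c₂ * h1 - c₁ * h2
    exact Prod.ext e1 e2

/-- the map above defines a simply transitive action of `(ℂ², +)` on `ℂ²`. -/
theorem action_simply_transitive (m : ℕ) (c₁ c₂ : ℂ) (hc : (c₁, c₂) ≠ (0, 0))
    (μ : ℂ) (hμ : μ ≠ 0) (l : ℕ → ℂ) :
    IsAction (PhiG m l c₁ c₂ μ) ∧
      ∀ P Q : ℂ × ℂ, ∃! t : ℂ × ℂ, PhiG m l c₁ c₂ μ t P = Q := by
  have hN : c₁ * (starRingEnd ℂ) c₁ + c₂ * (starRingEnd ℂ) c₂ ≠ 0 := by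
    rw [Complex.mul_conj, Complex.mul_conj]
    rw [← Complex.ofReal_add]
    rw [Ne, Complex.ofReal_eq_zero]
    have h0 : c₁ ≠ 0 ∨ c₂ ≠ 0 := by
      by_contra h
      push_neg at h
      exact hc (by simp [h.1, h.2])
    intro hz
    rcases h0 with h | h
    · have h5 := Complex.normSq_pos.mpr h
      have h6 := Complex.normSq_nonneg c₂
      linarith
    · have h5 := Complex.normSq_pos.mpr h
      have h6 := Complex.normSq_nonneg c₁
      linarith
  constructor
  · constructor
    · intro z
      simp only [PhiG, mul_zero, add_zero, zero_add]
      rw [gsum_eq]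
      simp
    · intro t t' z
      simp only [PhiG, Prod.fst_add, Prod.snd_add, Prod.mk.injEq]
      rw [gsum_eq, gsum_eq, gsum_eq]
      constructor
      · have harg : z.2 + (c₁ * (t.1 + t'.1) + c₂ * (t.2 + t'.2))
            = z.2 + c₁ * t'.1 + c₂ * t'.2 + (c₁ * t.1 + c₂ * t.2) := by ring
        rw [harg]
        ring
      · ring
  · intro P Q
    set d : ℂ := Q.2 - P.2 with hd
    set e : ℂ := (Q.1 - P.1 - (Ffun m l (P.2 + d) - Ffun m l P.2)) / μ with he
    have hiff : ∀ t : ℂ × ℂ, PhiG m l c₁ c₂ μ t P = Q ↔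
        (c₁ * t.1 + c₂ * t.2 = d ∧
          (starRingEnd ℂ) c₂ * t.1 - (starRingEnd ℂ) c₁ * t.2 = e) := by
      intro t
      rw [PhiG, Prod.ext_iff]
      simp only
      rw [gsum_eq]
      constructor
      · rintro ⟨h1, h2⟩
        have hr : c₁ * t.1 + c₂ * t.2 = d := by rw [hd]; linear_combination h2
        refine ⟨hr, ?_⟩
        rw [hr] at h1
        rw [he, eq_div_iff hμ]
        linear_combination h1
      · rintro ⟨h1, h2⟩
        rw [h1, h2]
        constructor
        · rw [he]
          field_simp
          ring
        · rw [hd] at h1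
          linear_combination h1
    exact (existsUnique_congr hiff).mpr (lin_solve c₁ c₂ hN d e)
end

section
/- Let m ∈ ℕ, (c₁, c₂) ∈ ℂ² with (c₁, c₂) ≠ (0,0), and let b₀, …, b_m ∈ ℂ[t₁, t₂] satisfy Σ_{i=0}^{m} (bᵢ(t₁ + t₁', t₂ + t₂') − bᵢ(t₁', t₂'))·yⁱ = Σ_{i=0}^{m} bᵢ(t₁, t₂)·(y + c₁t₁' + c₂t₂')ⁱ for all (t₁,t₂), (t₁',t₂') ∈ ℂ² and all y ∈ ℂ. Then there exist λ₀, …, λ_m, μ₀ ∈ ℂ such that bᵢ(t₁,t₂) = gᵢ(c₁t₁ + c₂t₂) for 1 ≤ i ≤ m and b₀(t₁,t₂) = g₀(c₁t₁ + c₂t₂) + μ₀(c̄₂t₁ − c̄₁t₂), where c̄₁, c̄₂ are the complex conjugates of c₁, c₂ and gᵢ(r) := Σ_{j=i}^{m} (λⱼ/(j−i+1))·C(j, j−i)·r^{j−i+1}. -/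
open Finset

section Aux
open Polynomial

lemma sum_pow_eq_zero {n : ℕ} {a : ℕ → ℂ}
    (h : ∀ y : ℂ, ∑ i ∈ Finset.range n, a i * y ^ i = 0) : ∀ i < n, a i = 0 := by
  intro i hi
  have hp : (∑ j ∈ Finset.range n, Polynomial.C (a j) * Polynomial.X ^ j) = (0 : ℂ[X]) := by
    apply Polynomial.funext
    intro y
    simpa [Polynomial.eval_finset_sum] using h y
  have := congrArg (fun p : ℂ[X] => p.coeff i) hp
  simpa [Polynomial.finset_sum_coeff, Polynomial.coeff_C_mul, Polynomial.coeff_X_pow,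
    Finset.mem_range.mpr hi] using this

lemma sum_pow_ext {n : ℕ} {a b : ℕ → ℂ}
    (h : ∀ y : ℂ, ∑ i ∈ Finset.range n, a i * y ^ i = ∑ i ∈ Finset.range n, b i * y ^ i) :
    ∀ i < n, a i = b i := by
  intro i hi
  have h2 := sum_pow_eq_zero (a := fun i => a i - b i) (fun y => by
    simp [sub_mul, Finset.sum_sub_distrib, h y]) i hi
  simpa [sub_eq_zero] using h2

lemma sum_mul_zero_pow (n : ℕ) (a : ℕ → ℂ) :
    ∑ i ∈ Finset.range (n + 1), a i * (0 : ℂ) ^ i = a 0 := by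
  rw [Finset.sum_range_succ']
  simp

end Aux

/-- Evaluation of a polynomial in two variables at a point of `ℂ²`. -/
noncomputable def ev (p : MvPolynomial (Fin 2) ℂ) (t : ℂ × ℂ) : ℂ :=
  MvPolynomial.eval ![t.1, t.2] p

section Line
open Polynomial

noncomputable def lineP (p : MvPolynomial (Fin 2) ℂ) (v : ℂ × ℂ) : Polynomial ℂ :=
  MvPolynomial.aeval ![Polynomial.C v.1 * Polynomial.X, Polynomial.C v.2 * Polynomial.X] p

lemma lineP_eval (p : MvPolynomial (Fin 2) ℂ) (v : ℂ × ℂ) (z : ℂ) :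
    (lineP p v).eval z = ev p (z * v.1, z * v.2) := by
  have h2 := congrFun (congrArg DFunLike.coe (MvPolynomial.comp_aeval (R := ℂ)
    (f := ![Polynomial.C v.1 * Polynomial.X, Polynomial.C v.2 * Polynomial.X])
    (φ := Polynomial.aeval z))) p
  simp only [AlgHom.comp_apply] at h2
  rw [← Polynomial.coe_aeval_eq_eval, lineP, h2]
  have e2 : (fun i => (Polynomial.aeval z)
      (![Polynomial.C v.1 * Polynomial.X, Polynomial.C v.2 * Polynomial.X] i))
      = ![z * v.1, z * v.2] := by
    funext i
    match i with
    | 0 =>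
      simp only [Matrix.cons_val_zero, map_mul, Polynomial.aeval_C, Polynomial.aeval_X,
        Algebra.algebraMap_self, RingHom.id_apply]
      ring
    | 1 =>
      simp only [Matrix.cons_val_one, Matrix.head_cons, Matrix.cons_val_zero, map_mul, Polynomial.aeval_C,
        Polynomial.aeval_X, Algebra.algebraMap_self, RingHom.id_apply]
      ring
  rw [e2]
  rfl

end Line

/-- if `b₀, …, b_m ∈ ℂ[t₁,t₂]` satisfy
`Σᵢ (bᵢ(t+t') − bᵢ(t'))·yⁱ = Σᵢ bᵢ(t)·(y + c₁t₁' + c₂t₂')ⁱ` with `(c₁,c₂) ≠ (0,0)`, then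
there exist `λ₀, …, λ_m, μ₀` such that `bᵢ = gᵢ(c₁t₁+c₂t₂)` for `1 ≤ i ≤ m` and
`b₀ = g₀(c₁t₁+c₂t₂) + μ₀(c̄₂t₁ − c̄₁t₂)`. -/
theorem b_coefficients_form (m : ℕ) (c₁ c₂ : ℂ) (hc : (c₁, c₂) ≠ (0, 0))
    (Bc : ℕ → MvPolynomial (Fin 2) ℂ)
    (heq : ∀ (t t' : ℂ × ℂ) (y : ℂ),
      ∑ i ∈ Finset.range (m + 1), (ev (Bc i) (t + t') - ev (Bc i) t') * y ^ i =
        ∑ i ∈ Finset.range (m + 1), ev (Bc i) t * (y + c₁ * t'.1 + c₂ * t'.2) ^ i) :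
    ∃ (l : ℕ → ℂ) (μ₀ : ℂ),
      (∀ t : ℂ × ℂ, ev (Bc 0) t =
          gfun m l 0 (c₁ * t.1 + c₂ * t.2) +
            μ₀ * ((starRingEnd ℂ) c₂ * t.1 - (starRingEnd ℂ) c₁ * t.2)) ∧
      (∀ i, 1 ≤ i → i ≤ m →
        ∀ t : ℂ × ℂ, ev (Bc i) t = gfun m l i (c₁ * t.1 + c₂ * t.2)) := by
  classical
  open Polynomial in
  -- setup
  set N : ℂ := (starRingEnd ℂ) c₁ * c₁ + (starRingEnd ℂ) c₂ * c₂ with hNdef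
  have hN : N ≠ 0 := by
    have h1 : N = ((Complex.normSq c₁ + Complex.normSq c₂ : ℝ) : ℂ) := by
      push_cast
      rw [hNdef, ← Complex.normSq_eq_conj_mul_self, ← Complex.normSq_eq_conj_mul_self]
    rw [h1]
    have : c₁ ≠ 0 ∨ c₂ ≠ 0 := by
      by_contra hcon
      push_neg at hcon
      exact hc (by rw [hcon.1, hcon.2])
    have hpos : (0:ℝ) < Complex.normSq c₁ + Complex.normSq c₂ := by
      rcases this with h | h
      · have := Complex.normSq_pos.mpr h
        have := Complex.normSq_nonneg c₂
        linarith
      · have := Complex.normSq_pos.mpr h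
        have := Complex.normSq_nonneg c₁
        linarith
    exact Complex.ofReal_ne_zero.mpr (ne_of_gt hpos)
  set t01 : ℂ := (starRingEnd ℂ) c₁ / N with ht01
  set t02 : ℂ := (starRingEnd ℂ) c₂ / N with ht02
  have hst0 : c₁ * t01 + c₂ * t02 = 1 := by
    rw [ht01, ht02]
    field_simp
    ring
  -- component versions of the hypothesis
  have hFull : ∀ a b a' b' y : ℂ,
      ∑ i ∈ Finset.range (m + 1), (ev (Bc i) (a + a', b + b') - ev (Bc i) (a', b')) * y ^ i =
        ∑ i ∈ Finset.range (m + 1), ev (Bc i) (a, b) * (y + c₁ * a' + c₂ * b') ^ i := by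
    intro a b a' b' y
    simpa using heq (a, b) (a', b') y
  have hE : ∀ a b a' b' : ℂ,
      ev (Bc 0) (a + a', b + b') - ev (Bc 0) (a', b') =
        ∑ i ∈ Finset.range (m + 1), ev (Bc i) (a, b) * (c₁ * a' + c₂ * b') ^ i := by
    intro a b a' b'
    have h := hFull a b a' b' 0
    rw [sum_mul_zero_pow m (fun i => ev (Bc i) (a + a', b + b') - ev (Bc i) (a', b'))] at h
    simpa using h
  -- the kernel-line facts
  have hKer : ∀ a' b' : ℂ, c₁ * a' + c₂ * b' = 0 → ∀ w : ℂ,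
      ∑ i ∈ Finset.range (m + 1), ev (Bc i) (a', b') * w ^ i = ev (Bc 0) (a', b') := by
    intro a' b' hs w
    have h1 := hE (w * t01) (w * t02) a' b'
    rw [hs] at h1
    rw [sum_mul_zero_pow m (fun i => ev (Bc i) (w * t01, w * t02))] at h1
    have h2 := hE a' b' (w * t01) (w * t02)
    have hw : c₁ * (w * t01) + c₂ * (w * t02) = w := by linear_combination w * hst0
    rw [hw] at h2
    rw [add_comm a' (w * t01), add_comm b' (w * t02)] at h2
    linear_combination h1 - h2
  have hKerZero : ∀ a' b' : ℂ, c₁ * a' + c₂ * b' = 0 → ∀ i, 1 ≤ i → i ≤ m →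
      ev (Bc i) (a', b') = 0 := by
    intro a' b' hs i h1i him
    have hb : ∀ w : ℂ,
        ∑ j ∈ Finset.range (m + 1), (if j = 0 then ev (Bc 0) (a', b') else 0) * w ^ j =
          ev (Bc 0) (a', b') := by
      intro w
      rw [Finset.sum_eq_single_of_mem 0 (by simp)]
      · simp
      · intro j _ hj0
        simp [hj0]
    have h := sum_pow_ext (a := fun j => ev (Bc j) (a', b'))
      (b := fun j => if j = 0 then ev (Bc 0) (a', b') else 0)
      (fun w => (hKer a' b' hs w).trans (hb w).symm) i (by omega)
    simpa [Nat.one_le_iff_ne_zero.mp h1i] using h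
  -- linearity on the kernel line
  set q0 : Polynomial ℂ := lineP (Bc 0) (c₂, -c₁) with hq0def
  have hq0eval : ∀ z : ℂ, q0.eval z = ev (Bc 0) (z * c₂, z * (-c₁)) := fun z =>
    lineP_eval (Bc 0) (c₂, -c₁) z
  have hq0add : ∀ x y : ℂ, q0.eval (x + y) = q0.eval x + q0.eval y := by
    intro x y
    rw [hq0eval, hq0eval, hq0eval]
    have h := hE (x * c₂) (x * (-c₁)) (y * c₂) (y * (-c₁))
    have hs : c₁ * (y * c₂) + c₂ * (y * (-c₁)) = 0 := by ring
    rw [hs] at h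
    rw [sum_mul_zero_pow m (fun i => ev (Bc i) (x * c₂, x * (-c₁)))] at h
    have e1 : (x + y) * c₂ = x * c₂ + y * c₂ := by ring
    have e2 : (x + y) * (-c₁) = x * (-c₁) + y * (-c₁) := by ring
    rw [e1, e2]
    linear_combination h
  have hq0zero : q0.eval 0 = 0 := by
    simpa using hq0add 0 0
  have hq0nat : ∀ n : ℕ, q0.eval (n : ℂ) = n * q0.eval 1 := by
    intro n
    induction n with
    | zero => simpa using hq0zero
    | succ k ih =>
      have := hq0add (k : ℂ) 1
      push_cast
      push_cast at this
      rw [this, ih]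
      ring
  have hq0X : q0 = Polynomial.C (q0.eval 1) * Polynomial.X := by
    have hroot : ∀ n : ℕ, (q0 - Polynomial.C (q0.eval 1) * Polynomial.X).IsRoot (n : ℂ) := by
      intro n
      simp only [Polynomial.IsRoot, Polynomial.eval_sub, Polynomial.eval_mul, Polynomial.eval_C,
        Polynomial.eval_X, hq0nat n]
      ring
    have hinf : {x : ℂ | (q0 - Polynomial.C (q0.eval 1) * Polynomial.X).IsRoot x}.Infinite := by
      apply Set.Infinite.mono _ (Set.infinite_range_of_injective
        (Nat.cast_injective : Function.Injective (Nat.cast : ℕ → ℂ)))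
      rintro _ ⟨n, rfl⟩
      exact hroot n
    have h0 := Polynomial.eq_zero_of_infinite_isRoot _ hinf
    exact sub_eq_zero.mp h0
  have hkform : ∀ a' b' : ℂ, c₁ * a' + c₂ * b' = 0 →
      ev (Bc 0) (a', b') =
        (ev (Bc 0) (c₂, -c₁) / N) * ((starRingEnd ℂ) c₂ * a' - (starRingEnd ℂ) c₁ * b') := by
    intro a' b' hs
    set z : ℂ := ((starRingEnd ℂ) c₂ * a' - (starRingEnd ℂ) c₁ * b') / N with hz
    have h1 : a' = z * c₂ := by
      rw [hz]
      field_simp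
      linear_combination (starRingEnd ℂ) c₁ * hs
    have h2 : b' = z * (-c₁) := by
      rw [hz]
      field_simp
      linear_combination (starRingEnd ℂ) c₂ * hs
    have he1 : q0.eval 1 = ev (Bc 0) (c₂, -c₁) := by simpa using hq0eval 1
    calc ev (Bc 0) (a', b') = ev (Bc 0) (z * c₂, z * (-c₁)) := by rw [← h1, ← h2]
      _ = q0.eval z := (hq0eval z).symm
      _ = q0.eval 1 * z := by
          conv_lhs => rw [hq0X]
          simp only [Polynomial.eval_mul, Polynomial.eval_C, Polynomial.eval_X]
      _ = (ev (Bc 0) (c₂, -c₁) / N) *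
            ((starRingEnd ℂ) c₂ * a' - (starRingEnd ℂ) c₁ * b') := by
          rw [he1, hz]; field_simp
  -- the transversal line
  set q : Polynomial ℂ := lineP (Bc 0) (t01, t02) with hqdef
  have hqeval : ∀ z : ℂ, q.eval z = ev (Bc 0) (z * t01, z * t02) := fun z =>
    lineP_eval (Bc 0) (t01, t02) z
  have hTrans : ∀ r r' : ℂ,
      ∑ i ∈ Finset.range (m + 1), ev (Bc i) (r * t01, r * t02) * r' ^ i =
        q.eval (r + r') - q.eval r' := by
    intro r r'
    have h := hE (r * t01) (r * t02) (r' * t01) (r' * t02)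
    have hw : c₁ * (r' * t01) + c₂ * (r' * t02) = r' := by linear_combination r' * hst0
    rw [hw] at h
    have e1 : r * t01 + r' * t01 = (r + r') * t01 := by ring
    have e2 : r * t02 + r' * t02 = (r + r') * t02 := by ring
    rw [e1, e2] at h
    rw [hqeval, hqeval]
    linear_combination -h
  have hPoly : ∀ r : ℂ,
      (∑ i ∈ Finset.range (m + 1), Polynomial.C (ev (Bc i) (r * t01, r * t02)) * Polynomial.X ^ i)
        = Polynomial.taylor r q - q := by
    intro r
    apply Polynomial.funext
    intro r'
    rw [Polynomial.eval_sub, Polynomial.taylor_eval, Polynomial.eval_finset_sum]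
    simp only [Polynomial.eval_mul, Polynomial.eval_C, Polynomial.eval_pow, Polynomial.eval_X]
    rw [add_comm r' r]
    exact hTrans r r'
  have hH : ∀ i, i ≤ m → ∀ r : ℂ,
      ev (Bc i) (r * t01, r * t02) = (Polynomial.hasseDeriv i q).eval r - q.coeff i := by
    intro i him r
    have h := congrArg (fun p : Polynomial ℂ => p.coeff i) (hPoly r)
    simp only [Polynomial.finset_sum_coeff, Polynomial.coeff_C_mul, Polynomial.coeff_X_pow,
      Polynomial.coeff_sub, Polynomial.taylor_coeff, mul_ite, mul_one, mul_zero] at h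
    rwa [Finset.sum_ite_eq (Finset.range (m + 1)) i,
      if_pos (Finset.mem_range.mpr (by omega : i < m + 1))] at h
  have hHigh : ∀ j, m + 2 ≤ j → q.coeff j = 0 := by
    intro j hj
    have hd : ∀ r : ℂ, (Polynomial.hasseDeriv (j - 1) q).eval r = q.coeff (j - 1) := by
      intro r
      have h := congrArg (fun p : Polynomial ℂ => p.coeff (j - 1)) (hPoly r)
      simp only [Polynomial.finset_sum_coeff, Polynomial.coeff_C_mul, Polynomial.coeff_X_pow,
        Polynomial.coeff_sub, Polynomial.taylor_coeff, mul_ite, mul_one, mul_zero] at h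
      rw [Finset.sum_eq_zero (fun k hk => by
        have : k ≠ j - 1 := by
          simp only [Finset.mem_range] at hk
          omega
        simp [Ne.symm this])] at h
      linear_combination -h
    have hCeq : Polynomial.hasseDeriv (j - 1) q = Polynomial.C (q.coeff (j - 1)) := by
      apply Polynomial.funext
      intro r
      rw [hd r, Polynomial.eval_C]
    have h1 := congrArg (fun p : Polynomial ℂ => p.coeff 1) hCeq
    simp only [Polynomial.hasseDeriv_coeff, Polynomial.coeff_C] at h1
    have e : 1 + (j - 1) = j := by omega
    rw [e] at h1
    simp only [one_ne_zero, if_false] at h1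
    have hch : j.choose (j - 1) = j := by
      have h2 : j.choose (j - 1) = j.choose 1 := by
        have := Nat.choose_symm (n := j) (k := 1) (by omega)
        simpa using this
      rw [h2, Nat.choose_one_right]
    rw [hch] at h1
    have hj0 : ((j : ℕ) : ℂ) ≠ 0 := Nat.cast_ne_zero.mpr (by omega)
    exact (mul_eq_zero.mp h1).resolve_left hj0
  have hdeg : q.natDegree ≤ m + 1 :=
    Polynomial.natDegree_le_iff_coeff_eq_zero.mpr (fun M hM => hHigh M (by omega))
  -- the explicit form of h_i
  set l : ℕ → ℂ := fun j => ((j + 1 : ℕ) : ℂ) * q.coeff (j + 1) with hldef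
  have hG : ∀ i, i ≤ m → ∀ r : ℂ,
      (Polynomial.hasseDeriv i q).eval r - q.coeff i = gfun m l i r := by
    intro i him r
    have hdh : (Polynomial.hasseDeriv i q).natDegree < m + 2 :=
      lt_of_le_of_lt ((Polynomial.natDegree_hasseDeriv_le q i).trans
        ((Nat.sub_le _ _).trans hdeg)) (by omega)
    rw [Polynomial.eval_eq_sum_range' hdh]
    simp only [Polynomial.hasseDeriv_coeff]
    rw [Finset.sum_range_succ']
    simp only [zero_add, pow_zero, mul_one, Nat.choose_self, Nat.cast_one, one_mul]
    rw [add_sub_cancel_right]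
    rw [← Finset.sum_subset (Finset.range_subset_range.mpr (by omega : m + 1 - i ≤ m + 1))
      (fun n hn hn' => by
        have hzn : q.coeff (n + 1 + i) = 0 := by
          apply hHigh
          simp only [Finset.mem_range] at hn hn'
          omega
        simp [hzn])]
    unfold gfun
    refine Finset.sum_nbij' (fun n => n + i) (fun j => j - i) ?_ ?_ ?_ ?_ ?_
    · intro n hn
      simp only [Finset.mem_range] at hn
      simp only [Finset.mem_Icc]
      omega
    · intro j hj
      simp only [Finset.mem_Icc] at hj
      simp only [Finset.mem_range]
      omega
    · intro n _
      show n + i - i = n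
      omega
    · intro j hj
      simp only [Finset.mem_Icc] at hj
      show j - i + i = j
      omega
    · intro n hn
      simp only [Finset.mem_range] at hn
      have e1 : n + i - i = n := by omega
      have e2 : n + 1 + i = n + i + 1 := by omega
      rw [e1, e2]
      simp only [hldef]
      have hn1 : ((n + 1 : ℕ) : ℂ) ≠ 0 := Nat.cast_ne_zero.mpr (by omega)
      have h1 := Nat.add_one_mul_choose_eq (n + i) n
      have h1 := h1
      have h2 : (n + i + 1).choose i = (n + i + 1).choose (n + 1) := by
        have h3 := Nat.choose_symm (n := n + i + 1) (k := n + 1) (by omega)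
        have e3 : n + i + 1 - (n + 1) = i := by omega
        rw [e3] at h3
        exact h3
      have keyC : ((n + 1 : ℕ) : ℂ) * (((n + i + 1).choose i : ℕ) : ℂ) =
          ((n + i + 1 : ℕ) : ℂ) * (((n + i).choose n : ℕ) : ℂ) := by
        have key : (n + 1) * ((n + i + 1).choose i) = (n + i + 1) * ((n + i).choose n) := by
          rw [h2, mul_comm]
          exact h1.symm
        exact_mod_cast congrArg (Nat.cast : ℕ → ℂ) key
      rw [div_mul_eq_mul_div, div_mul_eq_mul_div, eq_div_iff hn1]
      push_cast
      push_cast at keyC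
      linear_combination (q.coeff (n + i + 1) * r ^ (n + 1)) * keyC
  -- decomposition of a general point
  have hDecompAll : ∀ a b : ℂ, ∀ i, i ≤ m →
      ev (Bc i) (a, b) =
        ev (Bc i) (a - (c₁ * a + c₂ * b) * t01, b - (c₁ * a + c₂ * b) * t02) +
          ev (Bc i) ((c₁ * a + c₂ * b) * t01, (c₁ * a + c₂ * b) * t02) := by
    intro a b i him
    have hks : c₁ * (a - (c₁ * a + c₂ * b) * t01) + c₂ * (b - (c₁ * a + c₂ * b) * t02) = 0 := by
      linear_combination -(c₁ * a + c₂ * b) * hst0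
    have h : ∀ y : ℂ,
        ∑ j ∈ Finset.range (m + 1),
          (ev (Bc j) (a, b) -
            ev (Bc j) (a - (c₁ * a + c₂ * b) * t01, b - (c₁ * a + c₂ * b) * t02)) * y ^ j =
        ∑ j ∈ Finset.range (m + 1),
          ev (Bc j) ((c₁ * a + c₂ * b) * t01, (c₁ * a + c₂ * b) * t02) * y ^ j := by
      intro y
      have h := hFull ((c₁ * a + c₂ * b) * t01) ((c₁ * a + c₂ * b) * t02)
        (a - (c₁ * a + c₂ * b) * t01) (b - (c₁ * a + c₂ * b) * t02) y
      have hyy : y + c₁ * (a - (c₁ * a + c₂ * b) * t01) + c₂ * (b - (c₁ * a + c₂ * b) * t02)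
          = y := by linear_combination hks
      rw [hyy] at h
      have e1 : (c₁ * a + c₂ * b) * t01 + (a - (c₁ * a + c₂ * b) * t01) = a := by ring
      have e2 : (c₁ * a + c₂ * b) * t02 + (b - (c₁ * a + c₂ * b) * t02) = b := by ring
      rw [e1, e2] at h
      simpa using h
    have := sum_pow_ext h i (by omega)
    linear_combination this
  -- conclusion
  refine ⟨l, ev (Bc 0) (c₂, -c₁) / N, ?_, ?_⟩
  · intro t
    obtain ⟨a, b⟩ := t
    simp only
    have hdec := hDecompAll a b 0 (by omega)
    have hks : c₁ * (a - (c₁ * a + c₂ * b) * t01) + c₂ * (b - (c₁ * a + c₂ * b) * t02) = 0 := by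
      linear_combination -(c₁ * a + c₂ * b) * hst0
    have hk := hkform _ _ hks
    have hg := (hH 0 (by omega) (c₁ * a + c₂ * b)).trans (hG 0 (by omega) (c₁ * a + c₂ * b))
    rw [hdec, hk, hg]
    rw [ht01, ht02]
    field_simp
    ring
  · intro i h1i him t
    obtain ⟨a, b⟩ := t
    simp only
    have hdec := hDecompAll a b i him
    have hks : c₁ * (a - (c₁ * a + c₂ * b) * t01) + c₂ * (b - (c₁ * a + c₂ * b) * t02) = 0 := by
      linear_combination -(c₁ * a + c₂ * b) * hst0
    have hk := hKerZero _ _ hks i h1i him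
    have hg := (hH i him (c₁ * a + c₂ * b)).trans (hG i him (c₁ * a + c₂ * b))
    rw [hdec, hk, hg, zero_add]
end

section
/- Let (ω₀, …, ω_{n+1}) be an algebraic key sequence, with α_k := e_{k−1}/e_k where e_k := gcd(|ω₀|, …, |ω_k|). Let i₁ < i₂ < ⋯ < i_l be exactly those indices k ∈ {1, …, n} with α_k ≥ 2. Then the subsequence (ω₀, ω_{i₁}, …, ω_{i_l}, ω_{n+1}) (the essential subsequence) is also an algebraic key sequence. -/
open Finset

/-- `eSeq ω k = gcd(|ω₀|, …, |ω_k|)`. -/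
def eSeq (ω : ℕ → ℤ) (k : ℕ) : ℕ :=
  (Finset.range (k + 1)).gcd fun i => (ω i).natAbs

/-- `αSeq ω k = e_{k-1} / e_k`. -/
def αSeq (ω : ℕ → ℤ) (k : ℕ) : ℕ :=
  eSeq ω (k - 1) / eSeq ω k

lemma eSeq_succ (ω : ℕ → ℤ) (k : ℕ) :
    eSeq ω (k+1) = Nat.gcd (ω (k+1)).natAbs (eSeq ω k) := by
  unfold eSeq
  rw [Finset.range_add_one, Finset.gcd_insert]
  rfl

lemma eSeq_zero (ω : ℕ → ℤ) : eSeq ω 0 = (ω 0).natAbs := by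
  simp [eSeq]

lemma eSeq_dvd (ω : ℕ → ℤ) (k : ℕ) : eSeq ω (k+1) ∣ eSeq ω k := by
  rw [eSeq_succ]; exact Nat.gcd_dvd_right _ _

lemma eSeq_pos (ω : ℕ → ℤ) (hpos : 1 ≤ ω 0) (k : ℕ) : 0 < eSeq ω k := by
  rcases Nat.eq_zero_or_pos (eSeq ω k) with h | h
  · exfalso
    have hd : eSeq ω k ∣ (ω 0).natAbs := Finset.gcd_dvd (Finset.mem_range.mpr (Nat.succ_pos k))
    rw [h] at hd
    have := Int.natAbs_pos.mpr (by omega : ω 0 ≠ 0)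
    omega
  · exact h

lemma alpha_mul (ω : ℕ → ℤ) (hpos : 1 ≤ ω 0) (k : ℕ) :
    αSeq ω (k+1) * eSeq ω (k+1) = eSeq ω k := by
  have := eSeq_dvd ω k
  have h2 := eSeq_pos ω hpos (k+1)
  unfold αSeq
  simp only [Nat.add_sub_cancel]
  exact Nat.div_mul_cancel this

lemma alpha_pos (ω : ℕ → ℤ) (hpos : 1 ≤ ω 0) (k : ℕ) : 1 ≤ αSeq ω (k+1) := by
  have h := alpha_mul ω hpos k
  have h1 := eSeq_pos ω hpos k
  have h2 := eSeq_pos ω hpos (k+1)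
  by_contra hc
  interval_cases h3 : αSeq ω (k+1)
  · omega

lemma noness_eq (ω : ℕ → ℤ) (hpos : 1 ≤ ω 0) (k : ℕ) (h : αSeq ω (k+1) ≤ 1) :
    eSeq ω (k+1) = eSeq ω k := by
  have h1 := alpha_pos ω hpos k
  have h2 := alpha_mul ω hpos k
  have : αSeq ω (k+1) = 1 := le_antisymm h h1
  rw [this] at h2; omega

lemma single_rep {j : ℕ} (ω' : ℕ → ℤ) (t : Fin j) :
    ∃ d : Fin j → ℕ, ω' t = ∑ m : Fin j, (d m : ℤ) * ω' m := by
  refine ⟨fun m => if m = t then 1 else 0, ?_⟩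
  rw [Finset.sum_eq_single t]
  · simp
  · intro b _ hb; simp [hb]
  · simp

lemma combine {j k : ℕ} (ω' : ℕ → ℤ) (c : Fin k → ℕ) (v : Fin k → ℤ)
    (d : Fin k → Fin j → ℕ) (h : ∀ i, v i = ∑ m : Fin j, (d i m : ℤ) * ω' m) :
    ∃ D : Fin j → ℕ, (∑ i : Fin k, (c i : ℤ) * v i) = ∑ m : Fin j, (D m : ℤ) * ω' m := by
  refine ⟨fun m => ∑ i : Fin k, c i * d i m, ?_⟩
  push_cast
  have : ∀ i : Fin k, (c i : ℤ) * v i = ∑ m : Fin j, (c i : ℤ) * ((d i m : ℤ) * ω' m) := by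
    intro i; rw [h i, Finset.mul_sum]
  rw [Finset.sum_congr rfl fun i _ => this i, Finset.sum_comm]
  refine Finset.sum_congr rfl fun m _ => ?_
  rw [Finset.sum_mul]
  refine Finset.sum_congr rfl fun i _ => ?_
  ring

lemma eSeq_const (ω : ℕ → ℤ) (hpos : 1 ≤ ω 0) (a b : ℕ) (hab : a ≤ b)
    (hno : ∀ k, a < k → k ≤ b → αSeq ω k ≤ 1) : eSeq ω b = eSeq ω a := by
  induction b, hab using Nat.le_induction with
  | base => rfl
  | succ b hb IH =>
    rw [noness_eq ω hpos b (hno (b+1) (by omega) le_rfl)]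
    exact IH fun k h1 h2 => hno k h1 (by omega)

lemma dec_lemma (ω : ℕ → ℤ) (hpos : 1 ≤ ω 0) (n : ℕ)
    (hlt : ∀ k, 1 ≤ k → k ≤ n → ω (k + 1) < (αSeq ω k : ℤ) * ω k)
    (t : ℕ) (ht1 : 1 ≤ t) (htn : t ≤ n) (m : ℕ) (h1 : t < m) (h2 : m ≤ n+1)
    (hno : ∀ k, t < k → k < m → αSeq ω k ≤ 1) :
    ω m < (αSeq ω t : ℤ) * ω t := by
  induction m, h1 using Nat.le_induction with
  | base => exact hlt t ht1 htn
  | succ m hm IH =>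
    have hmn : m ≤ n := by omega
    have ht1m : 1 ≤ m := by omega
    have hα : αSeq ω m = 1 := by
      have := alpha_pos ω hpos (m-1)
      rw [Nat.sub_add_cancel ht1m] at this
      have h2 := hno m (by omega) (by omega)
      omega
    have := hlt m ht1m hmn
    rw [hα] at this
    have hIH := IH (by omega) (fun k hk1 hk2 => hno k hk1 (by omega))
    push_cast at this
    omega

/-- let `(ω₀, …, ω_{n+1})` be an algebraic key sequence and let
`ι 1 < ι 2 < ⋯ < ι l` enumerate exactly those indices `k ∈ {1, …, n}` with `α_k ≥ 2`.
Then the essential subsequence `ω' = (ω₀, ω_{ι 1}, …, ω_{ι l}, ω_{n+1})` is again an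
algebraic key sequence. -/
theorem essential_subsequence_algebraic (n l : ℕ) (ω : ℕ → ℤ)
    (hpos : 1 ≤ ω 0)
    (hone : eSeq ω (n + 1) = 1)
    (hlt : ∀ k, 1 ≤ k → k ≤ n → ω (k + 1) < (αSeq ω k : ℤ) * ω k)
    (halg : ∀ k, 1 ≤ k → k ≤ n →
      ∃ c : Fin k → ℕ, (αSeq ω k : ℤ) * ω k = ∑ j : Fin k, (c j : ℤ) * ω (j : ℕ))
    (ι : ℕ → ℕ)
    (hmono : ∀ j j', 1 ≤ j → j < j' → j' ≤ l → ι j < ι j')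
    (hrange : ∀ k, (1 ≤ k ∧ k ≤ n ∧ 2 ≤ αSeq ω k) ↔ ∃ j, 1 ≤ j ∧ j ≤ l ∧ ι j = k)
    (ω' : ℕ → ℤ)
    (hω'0 : ω' 0 = ω 0)
    (hω'mid : ∀ j, 1 ≤ j → j ≤ l → ω' j = ω (ι j))
    (hω'top : ω' (l + 1) = ω (n + 1)) :
    1 ≤ ω' 0 ∧
    eSeq ω' (l + 1) = 1 ∧
    (∀ k, 1 ≤ k → k ≤ l → ω' (k + 1) < (αSeq ω' k : ℤ) * ω' k) ∧
    (∀ k, 1 ≤ k → k ≤ l →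
      ∃ c : Fin k → ℕ, (αSeq ω' k : ℤ) * ω' k = ∑ j : Fin k, (c j : ℤ) * ω' (j : ℕ)) := by
  have hι : ∀ j, 1 ≤ j → j ≤ l → 1 ≤ ι j ∧ ι j ≤ n ∧ 2 ≤ αSeq ω (ι j) :=
    fun j h1 h2 => (hrange (ι j)).mpr ⟨j, h1, h2, rfl⟩
  have hmono' : ∀ j j', 1 ≤ j → j ≤ j' → j' ≤ l → ι j ≤ ι j' := by
    intro j j' h1 h2 h3
    rcases eq_or_lt_of_le h2 with rfl | h
    · exact le_rfl
    · exact (hmono j j' h1 h h3).le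
  have noess : ∀ k, 1 ≤ k → k ≤ n → (¬ ∃ j, 1 ≤ j ∧ j ≤ l ∧ ι j = k) → αSeq ω k ≤ 1 := by
    intro k h1 h2 h3
    by_contra h
    exact h3 ((hrange k).mp ⟨h1, h2, by omega⟩)
  obtain ⟨ν, hν0, hνs⟩ : ∃ ν : ℕ → ℕ, ν 0 = 0 ∧ ∀ j, 1 ≤ j → ν j = ι j :=
    ⟨fun j => if j = 0 then 0 else ι j, rfl, fun j h => if_neg (by omega)⟩
  have hνn : ∀ j, j ≤ l → ν j ≤ n := by
    intro j hj
    rcases Nat.eq_zero_or_pos j with rfl | h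
    · rw [hν0]; omega
    · rw [hνs j h]; exact (hι j h hj).2.1
  have hνlt : ∀ j, j < l → ν j < ι (j+1) := by
    intro j hj
    rcases Nat.eq_zero_or_pos j with rfl | h
    · rw [hν0]; exact (hι 1 le_rfl (by omega)).1
    · rw [hνs j h]; exact hmono j (j+1) h (by omega) (by omega)
  have hgap : ∀ j k, j ≤ l → ν j < k → k ≤ n → (j < l → k < ι (j+1)) → αSeq ω k ≤ 1 := by
    intro j k hjl hlt' hkn hub
    apply noess k (by omega) hkn
    rintro ⟨j', h1, h2, rfl⟩
    by_cases hj' : j' ≤ j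
    · have hj0 : 1 ≤ j := le_trans h1 hj'
      have h4 : ι j' ≤ ι j := hmono' j' j h1 hj' hjl
      have h5 := hνs j hj0
      omega
    · have hjl' : j < l := by omega
      have h4 := hmono' (j+1) j' (by omega) (by omega) h2
      have h5 := hub hjl'
      omega
  have hE : ∀ j, j ≤ l → eSeq ω' j = eSeq ω (ν j) := by
    intro j
    induction j with
    | zero => intro _; rw [hν0, eSeq_zero, eSeq_zero, hω'0]
    | succ j IH =>
      intro hjl
      have hjl' : j < l := by omega
      have hι1 := hι (j+1) (by omega) hjl
      rw [eSeq_succ, IH (by omega), hω'mid (j+1) (by omega) hjl, hνs (j+1) (by omega)]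
      obtain ⟨m, hm⟩ : ∃ m, ι (j+1) = m + 1 := ⟨ι (j+1) - 1, by omega⟩
      rw [hm, eSeq_succ]
      congr 1
      have hlt2 := hνlt j hjl'
      exact (eSeq_const ω hpos (ν j) m (by omega)
        (fun k hk1 hk2 => hgap j k (by omega) hk1 (by omega) (fun _ => by omega))).symm
  have hEtop : eSeq ω' (l + 1) = 1 := by
    rw [eSeq_succ, hE l le_rfl, hω'top]
    have h5 : eSeq ω n = eSeq ω (ν l) :=
      eSeq_const ω hpos (ν l) n (hνn l le_rfl)
        (fun k h1 h2 => hgap l k le_rfl h1 h2 (fun h => absurd h (lt_irrefl l)))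
    rw [← h5, ← eSeq_succ]
    exact hone
  have hA : ∀ j, 1 ≤ j → j ≤ l → αSeq ω' j = αSeq ω (ι j) := by
    intro j h1 h2
    obtain ⟨m, rfl⟩ : ∃ m, j = m + 1 := ⟨j - 1, by omega⟩
    unfold αSeq
    simp only [Nat.add_sub_cancel]
    rw [hE (m+1) h2, hE m (by omega), hνs (m+1) (by omega)]
    congr 1
    have hι1 := hι (m+1) (by omega) h2
    have hlt2 := hνlt m (by omega)
    exact (eSeq_const ω hpos (ν m) (ι (m+1) - 1) (by omega)
      (fun k hk1 hk2 => hgap m k (by omega) hk1 (by omega) (fun _ => by omega))).symm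
  refine ⟨by rw [hω'0]; exact hpos, hEtop, ?_, ?_⟩
  · intro k hk1 hkl
    rw [hA k hk1 hkl, hω'mid k hk1 hkl]
    have hιk := hι k hk1 hkl
    have hνk := hνs k hk1
    by_cases hkl' : k < l
    · have hι2 := hι (k+1) (by omega) hkl'
      rw [hω'mid (k+1) (by omega) hkl']
      exact dec_lemma ω hpos n hlt (ι k) hιk.1 hιk.2.1 (ι (k+1))
        (hmono k (k+1) hk1 (by omega) hkl') (by omega)
        (fun k' h1 h2 => hgap k k' (by omega) (by omega) (by omega) (fun _ => by omega))
    · have hkl2 : k = l := by omega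
      subst hkl2
      rw [hω'top]
      exact dec_lemma ω hpos n hlt (ι k) hιk.1 hιk.2.1 (n+1) (by omega) le_rfl
        (fun k' h1 h2 => hgap k k' (by omega) (by omega) (by omega)
          (fun h => absurd h (lt_irrefl k)))
  · intro k hk1 hkl
    rw [hA k hk1 hkl, hω'mid k hk1 hkl]
    have hιk := hι k hk1 hkl
    have hrep : ∀ i, i < ι k → ∃ d : Fin k → ℕ, ω i = ∑ m : Fin k, (d m : ℤ) * ω' (m : ℕ) := by
      intro i
      induction i using Nat.strong_induction_on with
      | _ i IH =>
        intro hi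
        rcases Nat.eq_zero_or_pos i with rfl | h1
        · obtain ⟨d, hd⟩ := single_rep ω' (⟨0, by omega⟩ : Fin k)
          exact ⟨d, by rw [← hω'0]; exact hd⟩
        · have hin : i ≤ n := by have := hιk.2.1; omega
          by_cases hess : ∃ j, 1 ≤ j ∧ j ≤ l ∧ ι j = i
          · obtain ⟨j', hj1, hj2, hj3⟩ := hess
            have hj'k : j' < k := by
              by_contra h
              have := hmono' k j' hk1 (by omega) hj2
              omega
            obtain ⟨d, hd⟩ := single_rep ω' (⟨j', hj'k⟩ : Fin k)
            refine ⟨d, ?_⟩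
            rw [← hj3, ← hω'mid j' hj1 hj2]
            exact hd
          · have hα : αSeq ω i = 1 := by
              have h2 := noess i h1 hin hess
              have h3 := alpha_pos ω hpos (i-1)
              rw [Nat.sub_add_cancel h1] at h3
              omega
            obtain ⟨c', hc'⟩ := halg i h1 hin
            rw [hα] at hc'
            push_cast at hc'
            rw [one_mul] at hc'
            choose d hd using fun m : Fin i => IH m m.2 (lt_trans m.2 hi)
            obtain ⟨D, hD⟩ := combine ω' c' (fun m : Fin i => ω (m : ℕ)) d hd
            exact ⟨D, by rw [hc']; exact hD⟩
    obtain ⟨c, hc⟩ := halg (ι k) hιk.1 hιk.2.1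
    rw [hc]
    choose d hd using fun m : Fin (ι k) => hrep m m.2
    exact combine ω' c (fun m : Fin (ι k) => ω (m : ℕ)) d hd
end
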